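/- For every two positive integers ν and Δ, if G is a simple graph with matching number at most ν and maximum degree at most Δ, then the number of edges of G is at most Δ·ν + ⌊Δ/2⌋·⌊ν/⌈Δ/2⌉⌋, and in particular at most Δ·ν + ν. -/

import Mathlib

open Finset

/-- `M` is a matching in `G`: a set of edges of `G` that are pairwise vertex-disjoint. -/
def IsMatchingSet {V : Type*} (G : SimpleGraph V) (M : Finset (Sym2 V)) : Prop :=
  (↑M : Set (Sym2 V)) ⊆ G.edgeSet ∧
    ∀ e ∈ M, ∀ f ∈ M, e ≠ f → ∀ v : V, v ∈ e → v ∉ f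

namespace CH
set_option linter.unusedSectionVars false
set_option linter.unusedVariables false
open scoped Classical


variable {V : Type*} [Fintype V] [DecidableEq V]

/-- support of a set of edges -/
noncomputable def msupp (M : Finset (Sym2 V)) : Finset V :=
  univ.filter (fun v => ∃ e ∈ M, v ∈ e)

lemma mem_msupp {M : Finset (Sym2 V)} {v : V} : v ∈ msupp M ↔ ∃ e ∈ M, v ∈ e := by
  simp [msupp]

lemma msupp_mono {M N : Finset (Sym2 V)} (h : M ⊆ N) : msupp M ⊆ msupp N := by
  intro v hv; rw [mem_msupp] at *
  obtain ⟨e, he, hve⟩ := hv; exact ⟨e, h he, hve⟩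

variable {G : SimpleGraph V}

lemma msub {M K : Finset (Sym2 V)} (hM : IsMatchingSet G M) (h : K ⊆ M) :
    IsMatchingSet G K :=
  ⟨fun e he => hM.1 (h (by exact_mod_cast he)),
   fun e he f hf hef v hv => hM.2 e (h he) f (h hf) hef v hv⟩

lemma isMatchingSet_empty' : IsMatchingSet G (∅ : Finset (Sym2 V)) := by
  constructor <;> simp

lemma mdiag {M : Finset (Sym2 V)} (hM : IsMatchingSet G M) {e : Sym2 V}
    (he : e ∈ M) : ¬ e.IsDiag := by
  have := hM.1 (by exact_mod_cast he)
  exact SimpleGraph.not_isDiag_of_mem_edgeSet G this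

lemma medge_eq {M : Finset (Sym2 V)} (hM : IsMatchingSet G M) {e f : Sym2 V}
    {v : V} (he : e ∈ M) (hf : f ∈ M) (hve : v ∈ e) (hvf : v ∈ f) : e = f := by
  by_contra hne
  exact hM.2 e he f hf hne v hve hvf

lemma mpartner_unique {M : Finset (Sym2 V)} (hM : IsMatchingSet G M) {v a b : V}
    (ha : s(v,a) ∈ M) (hb : s(v,b) ∈ M) : a = b := by
  have := medge_eq hM ha hb (Sym2.mem_mk_left v a) (Sym2.mem_mk_left v b)
  rwa [Sym2.congr_right] at this

/-- the set of vertices of an edge, as a Finset -/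
noncomputable def everts (e : Sym2 V) : Finset V := univ.filter (· ∈ e)

lemma everts_pair {a b : V} (hab : a ≠ b) : everts (s(a,b)) = {a, b} := by
  ext v; simp [everts, Sym2.mem_iff]

lemma card_everts {e : Sym2 V} (he : ¬ e.IsDiag) : (everts e).card = 2 := by
  induction e with
  | _ a b =>
    rw [Sym2.isDiag_iff_proj_eq] at he
    rw [everts_pair he, card_insert_of_notMem (by simpa using he), card_singleton]

lemma msupp_eq_biUnion {M : Finset (Sym2 V)} : msupp M = M.biUnion everts := by
  ext v; simp [mem_msupp, everts]

lemma card_msupp' {M : Finset (Sym2 V)} (hM : IsMatchingSet G M) :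
    (msupp M).card = 2 * M.card := by
  rw [msupp_eq_biUnion, card_biUnion, Finset.sum_congr rfl
    (fun e he => card_everts (mdiag hM he))]
  · simp [mul_comm]
  · intro e he f hf hef
    simp only [Finset.disjoint_left, everts, mem_filter]
    rintro v ⟨-, hv⟩ ⟨-, hv'⟩
    exact hM.2 e he f hf hef v hv hv'

lemma munion {M N : Finset (Sym2 V)} (hM : IsMatchingSet G M)
    (hN : IsMatchingSet G N) (hd : Disjoint (msupp M) (msupp N)) :
    IsMatchingSet G (M ∪ N) := by
  constructor
  · intro e he
    simp only [coe_union, Set.mem_union, mem_coe] at he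
    rcases he with h | h
    · exact hM.1 (by exact_mod_cast h)
    · exact hN.1 (by exact_mod_cast h)
  · intro e he f hf hef v hve hvf
    rw [mem_union] at he hf
    have hsupp : ∀ {K : Finset (Sym2 V)} {g : Sym2 V} {w : V}, g ∈ K → w ∈ g → w ∈ msupp K :=
      fun hg hw => mem_msupp.2 ⟨_, hg, hw⟩
    rcases he with he | he <;> rcases hf with hf | hf
    · exact hM.2 e he f hf hef v hve hvf
    · exact (Finset.disjoint_left.1 hd (hsupp he hve) (hsupp hf hvf))
    · exact (Finset.disjoint_left.1 hd (hsupp hf hvf) (hsupp he hve))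
    · exact hN.2 e he f hf hef v hve hvf

lemma disjoint_of_supp_disjoint {M N : Finset (Sym2 V)} (hM : IsMatchingSet G M)
    (hd : Disjoint (msupp M) (msupp N)) : Disjoint M N := by
  rw [Finset.disjoint_left]
  intro e heM heN
  obtain ⟨a, b, rfl⟩ : ∃ a b, e = s(a,b) := ⟨e.out.1, e.out.2, e.out_eq.symm⟩
  have ha : a ∈ msupp M := mem_msupp.2 ⟨_, heM, by simp⟩
  have ha' : a ∈ msupp N := mem_msupp.2 ⟨_, heN, by simp⟩
  exact Finset.disjoint_left.1 hd ha ha'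

/-- matching number -/
noncomputable def mnum' (G : SimpleGraph V) : ℕ :=
  ((univ : Finset (Finset (Sym2 V))).filter (IsMatchingSet G)).sup Finset.card

lemma card_le_mnum' {M : Finset (Sym2 V)} (hM : IsMatchingSet G M) : M.card ≤ mnum' G :=
  Finset.le_sup (by simp [hM])

lemma exists_max_matching' (G : SimpleGraph V) :
    ∃ M : Finset (Sym2 V), IsMatchingSet G M ∧ M.card = mnum' G := by
  obtain ⟨M, hM, hMc⟩ := Finset.exists_mem_eq_sup
    ((univ : Finset (Finset (Sym2 V))).filter (IsMatchingSet G))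
    ⟨∅, by simp [isMatchingSet_empty']⟩ Finset.card
  refine ⟨M, ?_, hMc.symm⟩
  simpa using hM

/-- insert an edge with fresh endpoints into a matching -/
lemma minsert' {M : Finset (Sym2 V)} (hM : IsMatchingSet G M) {a b : V}
    (hab : G.Adj a b) (haM : a ∉ msupp M) (hbM : b ∉ msupp M) :
    IsMatchingSet G (insert (s(a,b)) M) ∧ (insert (s(a,b)) M).card = M.card + 1 := by
  have hnm : s(a,b) ∉ M := fun h => haM (mem_msupp.2 ⟨_, h, by simp⟩)
  constructor
  · constructor
    · intro e he
      simp only [coe_insert, Set.mem_insert_iff, mem_coe] at he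
      rcases he with rfl | h
      · exact hab
      · exact hM.1 (by exact_mod_cast h)
    · intro e he f hf hef v hve hvf
      rw [Finset.mem_insert] at he hf
      rcases he with rfl | he <;> rcases hf with rfl | hf
      · exact hef rfl
      · rcases Sym2.mem_iff.1 hve with rfl | rfl
        · exact haM (mem_msupp.2 ⟨_, hf, hvf⟩)
        · exact hbM (mem_msupp.2 ⟨_, hf, hvf⟩)
      · rcases Sym2.mem_iff.1 hvf with rfl | rfl
        · exact haM (mem_msupp.2 ⟨_, he, hve⟩)
        · exact hbM (mem_msupp.2 ⟨_, he, hve⟩)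
      · exact hM.2 e he f hf hef v hve hvf
  · exact card_insert_of_notMem hnm


/-- next vertex along a matching -/
noncomputable def pnext (K : Finset (Sym2 V)) (v : V) : Option V :=
  if h : ∃ w, s(v,w) ∈ K then some h.choose else none

lemma pnext_mem {K : Finset (Sym2 V)} {v w : V} (h : pnext K v = some w) : s(v,w) ∈ K := by
  unfold pnext at h
  split_ifs at h with hex
  obtain h' := Option.some_inj.1 h
  rw [← h']
  exact hex.choose_spec

lemma pnext_eq_some {K : Finset (Sym2 V)} (hK : IsMatchingSet G K) {v w : V}
    (hvw : s(v,w) ∈ K) : pnext K v = some w := by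
  unfold pnext
  have hex : ∃ w, s(v,w) ∈ K := ⟨w, hvw⟩
  rw [dif_pos hex]
  exact congrArg some (mpartner_unique hK hex.choose_spec hvw)

lemma pnext_none_iff {K : Finset (Sym2 V)} {v : V} :
    pnext K v = none ↔ v ∉ msupp K := by
  unfold pnext
  split_ifs with hex
  · constructor
    · intro h; simp at h
    · intro h
      exfalso
      obtain ⟨w, hw⟩ := hex
      exact h (mem_msupp.2 ⟨_, hw, by simp⟩)
  · constructor
    · intro _ hv
      rw [mem_msupp] at hv
      obtain ⟨e, he, hve⟩ := hv
      obtain ⟨a, b, rfl⟩ : ∃ a b, e = s(a,b) := ⟨e.out.1, e.out.2, e.out_eq.symm⟩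
      rcases Sym2.mem_iff.1 hve with rfl | rfl
      · exact hex ⟨b, he⟩
      · exact hex ⟨a, by rwa [Sym2.eq_swap]⟩
    · intro _; rfl

/-- alternating walk through B,A,B,A,... starting at u -/
noncomputable def walkseq (A B : Finset (Sym2 V)) (u : V) : ℕ → Option V
  | 0 => some u
  | (n+1) => (walkseq A B u n).bind (fun x => pnext (if Even n then B else A) x)

section Walk

variable {A B : Finset (Sym2 V)} {u : V}
  (hA : IsMatchingSet G A) (hB : IsMatchingSet G B)
  (hAB : Disjoint A B) (huA : u ∉ msupp A)

lemma ws_pred {n : ℕ} {y : V} (h : walkseq A B u (n+1) = some y) :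
    ∃ x, walkseq A B u n = some x ∧ pnext (if Even n then B else A) x = some y := by
  rw [walkseq] at h
  cases hx : walkseq A B u n with
  | none => rw [hx] at h; simp at h
  | some x => rw [hx] at h; exact ⟨x, rfl, h⟩

lemma ws_none_le {n m : ℕ} (hnm : n ≤ m) (h : walkseq A B u n = none) :
    walkseq A B u m = none := by
  induction m with
  | zero => rwa [Nat.le_zero.1 hnm] at h
  | succ m ih =>
    rcases Nat.lt_or_ge n (m+1) with hlt | hge
    · rw [walkseq, ih (by omega)]; rfl
    · rwa [show m + 1 = n by omega]

lemma ws_some_of_le {n m : ℕ} (hnm : n ≤ m) {y : V} (h : walkseq A B u m = some y) :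
    ∃ x, walkseq A B u n = some x := by
  cases hx : walkseq A B u n with
  | none => rw [ws_none_le hnm hx] at h; simp at h
  | some x => exact ⟨x, rfl⟩

lemma ws_step {n : ℕ} {x y : V} (hx : walkseq A B u n = some x)
    (hy : walkseq A B u (n+1) = some y) :
    s(x, y) ∈ (if Even n then B else A) := by
  obtain ⟨x', hx', hp⟩ := ws_pred hy
  rw [hx] at hx'
  obtain rfl := Option.some_inj.1 hx'
  exact pnext_mem hp

include hA hB hAB huA in
lemma ws_inj : ∀ j i (x : V), i < j → walkseq A B u i = some x →
    walkseq A B u j = some x → False := by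
  intro j
  induction j using Nat.strong_induction_on with
  | _ j IH =>
  intro i x hij hi hj
  obtain ⟨jm, rfl⟩ : ∃ jm, j = jm + 1 := ⟨j - 1, by omega⟩
  obtain ⟨p, hp, hpx⟩ := ws_pred hj
  have hedge : s(x, p) ∈ (if Even jm then B else A) := by
    rw [Sym2.eq_swap]; exact pnext_mem hpx
  have hCmatch : IsMatchingSet G (if Even jm then B else A) := by
    split_ifs; exacts [hB, hA]
  rcases Nat.eq_zero_or_pos i with rfl | hi1
  · -- x = u
    rw [walkseq] at hi
    obtain rfl := Option.some_inj.1 hi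
    by_cases hev : Even jm
    · rw [if_pos hev] at hedge
      rcases Nat.eq_zero_or_pos jm with rfl | hjm1
      · rw [walkseq] at hp
        obtain rfl := Option.some_inj.1 hp
        exact mdiag hB hedge (by simp)
      · obtain ⟨x1, hx1⟩ := ws_some_of_le (show 1 ≤ jm by omega) hp
        have h01 : s(u, x1) ∈ B := by
          have := ws_step (show walkseq A B u 0 = some u from rfl) hx1
          simpa using this
        obtain rfl : x1 = p := mpartner_unique hB h01 hedge
        rcases Nat.eq_or_lt_of_le (show 1 ≤ jm from hjm1) with heq | hlt
        · rw [← heq] at hev; simp at hev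
        · exact IH jm (by omega) 1 x1 hlt hx1 hp
    · rw [if_neg hev] at hedge
      exact huA (mem_msupp.2 ⟨_, hedge, by simp⟩)
  · -- i ≥ 1
    rcases Nat.eq_or_lt_of_le (show i + 1 ≤ jm + 1 from hij) with heq | hlt
    · have hji : jm = i := by omega
      subst hji
      rw [hi] at hp
      obtain rfl := Option.some_inj.1 hp
      exact mdiag hCmatch hedge (by simp)
    have hi1jm : i + 1 ≤ jm := by omega
    obtain ⟨q, hq⟩ := ws_some_of_le (show i - 1 ≤ jm + 1 by omega) hj
    obtain ⟨r, hr⟩ := ws_some_of_le (show i + 1 ≤ jm + 1 by omega) hj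
    have hqedge : s(q, x) ∈ (if Even (i-1) then B else A) := by
      have := ws_step hq (show walkseq A B u ((i-1)+1) = some x by
        rw [show i - 1 + 1 = i by omega]; exact hi)
      exact this
    have hredge : s(x, r) ∈ (if Even i then B else A) := ws_step hi hr
    by_cases hpar : jm % 2 = i % 2
    · -- same parity as i : compare with next edge e_i
      have h1 : Even i ↔ Even jm := by
        rw [Nat.even_iff, Nat.even_iff]; omega
      have hCC : (if Even jm then B else A) = (if Even i then B else A) := by
        by_cases h : Even jm
        · rw [if_pos h, if_pos (h1.2 h)]
        · rw [if_neg h, if_neg (fun hh => h (h1.1 hh))]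
      rw [hCC] at hedge hCmatch
      obtain rfl : r = p := mpartner_unique hCmatch hredge hedge
      have hine : i + 1 ≠ jm := by
        intro hcontra; omega
      exact IH jm (by omega) (i+1) r (by omega) hr hp
    · -- same parity as i-1 : compare with previous edge e_{i-1}
      have h1 : Even (i-1) ↔ Even jm := by
        rw [Nat.even_iff, Nat.even_iff]; omega
      have hCC : (if Even jm then B else A) = (if Even (i-1) then B else A) := by
        by_cases h : Even jm
        · rw [if_pos h, if_pos (h1.2 h)]
        · rw [if_neg h, if_neg (fun hh => h (h1.1 hh))]
      rw [hCC] at hedge hCmatch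
      rw [Sym2.eq_swap] at hqedge
      obtain rfl : q = p := mpartner_unique hCmatch hqedge hedge
      exact IH jm (by omega) (i-1) q (by omega) hq hp

include hA hB hAB huA in
lemma ws_term : ∃ n, walkseq A B u n = none := by
  by_contra hall
  push_neg at hall
  have hsome : ∀ n, ∃ x, walkseq A B u n = some x := by
    intro n
    cases h : walkseq A B u n with
    | none => exact absurd h (hall n)
    | some x => exact ⟨x, rfl⟩
  let f : ℕ → V := fun n => (hsome n).choose
  obtain ⟨m, n, hmn, hfeq⟩ := Finite.exists_ne_map_eq_of_infinite f
  rcases Nat.lt_or_ge m n with h | h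
  · exact ws_inj hA hB hAB huA n m (f m) h (hsome m).choose_spec
      (hfeq ▸ (hsome n).choose_spec)
  · exact ws_inj hA hB hAB huA m n (f n) (by omega) (hsome n).choose_spec
      (hfeq ▸ (hsome m).choose_spec)


lemma card_range_filter_even (n : ℕ) :
    ((range n).filter (fun i => Even i)).card = (n+1)/2 := by
  induction n with
  | zero => simp
  | succ n ih =>
    rw [Finset.range_add_one, Finset.filter_insert]
    by_cases h : Even n
    · rw [if_pos h, card_insert_of_notMem (by simp), ih]
      rw [Nat.even_iff] at h; omega
    · rw [if_neg h, ih]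
      rw [Nat.even_iff] at h; omega

lemma card_range_filter_odd (n : ℕ) :
    ((range n).filter (fun i => ¬ Even i)).card = n/2 := by
  have h1 := card_range_filter_even n
  have h2 : ((range n).filter (fun i => Even i)).card
      + ((range n).filter (fun i => ¬ Even i)).card = n := by
    rw [Finset.card_filter_add_card_filter_not, card_range]
  omega

lemma exchange {M N : Finset (Sym2 V)} (hM : IsMatchingSet G M) (hN : IsMatchingSet G N)
    {u : V} (huM : u ∉ msupp M) (huN : u ∈ msupp N) :
    (∃ M'' : Finset (Sym2 V), IsMatchingSet G M'' ∧ M''.card = M.card + 1) ∨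
    (∃ y : V, ∃ M' N' : Finset (Sym2 V), y ≠ u ∧ y ∈ msupp M ∧ y ∉ msupp N ∧
      IsMatchingSet G M' ∧ IsMatchingSet G N' ∧
      M'.card = M.card ∧ N'.card = N.card ∧
      msupp M' = (insert u (msupp M)) \ {y} ∧
      msupp N' = (insert y (msupp N)) \ {u} ∧
      (N ∩ M).card < (N' ∩ M).card) := by
  classical
  set A : Finset (Sym2 V) := M \ N with hAdef
  set B : Finset (Sym2 V) := N \ M with hBdef
  have hAM : A ⊆ M := sdiff_subset
  have hBN : B ⊆ N := sdiff_subset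
  have hAnotN : ∀ e ∈ A, e ∉ N := fun e he => (mem_sdiff.1 he).2
  have hBnotM : ∀ e ∈ B, e ∉ M := fun e he => (mem_sdiff.1 he).2
  have hA : IsMatchingSet G A := msub hM hAM
  have hB : IsMatchingSet G B := msub hN hBN
  have hABd : Disjoint A B := disjoint_sdiff_sdiff
  have huA : u ∉ msupp A := fun h => huM (msupp_mono hAM h)
  have huB : u ∈ msupp B := by
    obtain ⟨e, he, hue⟩ := mem_msupp.1 huN
    have heM : e ∉ M := fun h => huM (mem_msupp.2 ⟨e, h, hue⟩)
    exact mem_msupp.2 ⟨e, mem_sdiff.2 ⟨he, heM⟩, hue⟩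
  have hterm := ws_term hA hB hABd huA
  set n₀ := Nat.find hterm with hn0def
  have hn0 : walkseq A B u n₀ = none := Nat.find_spec hterm
  have h0some : walkseq A B u 0 = some u := rfl
  -- seq 1 is defined
  obtain ⟨e1, he1, hue1⟩ := mem_msupp.1 huB
  obtain ⟨a1, b1, rfl⟩ : ∃ a b, e1 = s(a,b) := ⟨e1.out.1, e1.out.2, e1.out_eq.symm⟩
  have hw1B : ∃ w, s(u, w) ∈ B := by
    rcases Sym2.mem_iff.1 hue1 with rfl | rfl
    · exact ⟨b1, he1⟩
    · exact ⟨a1, by rwa [Sym2.eq_swap]⟩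
  obtain ⟨w1, hw1⟩ := hw1B
  have h1some : walkseq A B u 1 = some w1 := by
    show walkseq A B u (0+1) = some w1
    rw [walkseq, h0some]
    show pnext (if Even 0 then B else A) u = some w1
    rw [if_pos (Nat.even_iff.2 rfl : Even 0)]
    exact pnext_eq_some hB hw1
  have hn0ne0 : n₀ ≠ 0 := fun h => by rw [h, h0some] at hn0; exact Option.some_ne_none _ hn0
  have hn0ne1 : n₀ ≠ 1 := fun h => by rw [h, h1some] at hn0; exact Option.some_ne_none _ hn0
  set L := n₀ - 1 with hLdef
  have hL1 : 1 ≤ L := by omega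
  have hLnone : walkseq A B u (L+1) = none := by rw [show L + 1 = n₀ by omega]; exact hn0
  have hLsome : ∃ x, walkseq A B u L = some x := by
    cases h : walkseq A B u L with
    | none => exact absurd h (Nat.find_min hterm (by omega))
    | some x => exact ⟨x, rfl⟩
  set xf : ℕ → V := fun n => (walkseq A B u n).getD u with hxfdef
  have hxf : ∀ i, i ≤ L → walkseq A B u i = some (xf i) := by
    intro i hi
    obtain ⟨x, hx⟩ := ws_some_of_le hi hLsome.choose_spec
    rw [hx]
    simp [hxfdef, hx]
  have hx0 : xf 0 = u := rfl
  have hedge : ∀ i, i < L → s(xf i, xf (i+1)) ∈ (if Even i then B else A) := fun i hi =>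
    ws_step (hxf i (by omega)) (hxf (i+1) (by omega))
  have hdis : ∀ i j, i < j → j ≤ L → xf i ≠ xf j := by
    intro i j hij hjL heq
    exact ws_inj hA hB hABd huA j i (xf i) hij (hxf i (by omega)) (heq ▸ hxf j hjL)
  have hend : xf L ∉ msupp (if Even L then B else A) := by
    rw [← pnext_none_iff]
    have h2 := hLnone
    rw [walkseq, hxf L le_rfl] at h2
    simpa using h2
  have hedgeA : ∀ i, i < L → ¬ Even i → s(xf i, xf (i+1)) ∈ A := by
    intro i h h2; have := hedge i h; rwa [if_neg h2] at this
  have hedgeB : ∀ i, i < L → Even i → s(xf i, xf (i+1)) ∈ B := by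
    intro i h h2; have := hedge i h; rwa [if_pos h2] at this
  -- classification of M-edges touching the path
  have hMedge : ∀ k, k ≤ L → ∀ e ∈ M, xf k ∈ e →
      ∃ i, i < L ∧ ¬ Even i ∧ e = s(xf i, xf (i+1)) := by
    intro k hk e heM hke
    rcases Nat.eq_zero_or_pos k with rfl | hk1
    · rw [hx0] at hke
      exact absurd (mem_msupp.2 ⟨e, heM, hke⟩) huM
    obtain ⟨k', rfl⟩ : ∃ k', k = k' + 1 := ⟨k - 1, by omega⟩
    by_cases hkE : Even (k' + 1)
    · have hodd : ¬ Even k' := by rw [Nat.even_iff] at *; omega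
      have hek : s(xf k', xf (k'+1)) ∈ A := hedgeA k' (by omega) hodd
      exact ⟨k', by omega, hodd, medge_eq hM heM (hAM hek) hke (Sym2.mem_mk_right _ _)⟩
    · rcases Nat.lt_or_ge (k'+1) L with hlt | hge
      · have hek : s(xf (k'+1), xf (k'+2)) ∈ A := hedgeA (k'+1) hlt hkE
        exact ⟨k'+1, hlt, hkE, medge_eq hM heM (hAM hek) hke (Sym2.mem_mk_left _ _)⟩
      · -- k = L, L odd : xf L is not matched by M
        exfalso
        have hkL : k' + 1 = L := by omega
        rw [if_neg (hkL ▸ hkE)] at hend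
        have heA : e ∉ A := fun h => (hkL ▸ hend) (mem_msupp.2 ⟨e, h, hke⟩)
        have heN : e ∈ N := by
          by_contra hN'
          exact heA (mem_sdiff.2 ⟨heM, hN'⟩)
        have hevk : Even k' := by rw [Nat.even_iff] at *; omega
        have heB : s(xf k', xf (k'+1)) ∈ B := hedgeB k' (by omega) hevk
        have := medge_eq hN heN (hBN heB) hke (Sym2.mem_mk_right _ _)
        rw [this] at heM
        exact hBnotM _ heB heM
  -- classification of N-edges touching the path
  have hNedge : ∀ k, k ≤ L → ∀ f ∈ N, xf k ∈ f →
      ∃ i, i < L ∧ Even i ∧ f = s(xf i, xf (i+1)) := by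
    intro k hk f hfN hkf
    by_cases hkE : Even k
    · rcases Nat.lt_or_ge k L with hlt | hge
      · have hek : s(xf k, xf (k+1)) ∈ B := hedgeB k hlt hkE
        exact ⟨k, hlt, hkE, medge_eq hN hfN (hBN hek) hkf (Sym2.mem_mk_left _ _)⟩
      · -- k = L even : xf L is not matched by N
        exfalso
        have hkL : k = L := by omega
        subst hkL
        rw [if_pos hkE] at hend
        have hfB : f ∉ B := fun h => hend (mem_msupp.2 ⟨f, h, hkf⟩)
        have hfM : f ∈ M := by
          by_contra hM'
          exact hfB (mem_sdiff.2 ⟨hfN, hM'⟩)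
        have hodd : ¬ Even (L-1) := by rw [Nat.even_iff] at *; omega
        have heA : s(xf (L-1), xf L) ∈ A := by
          have := hedgeA (L-1) (by omega) hodd
          rwa [show L - 1 + 1 = L by omega] at this
        have := medge_eq hM hfM (hAM heA) hkf (Sym2.mem_mk_right _ _)
        rw [this] at hfN
        exact hAnotN _ heA hfN
    · have hk1 : 1 ≤ k := by rw [Nat.even_iff] at hkE; omega
      have hevk : Even (k-1) := by rw [Nat.even_iff] at *; omega
      have hek : s(xf (k-1), xf k) ∈ B := by
        have := hedgeB (k-1) (by omega) hevk
        rwa [show k - 1 + 1 = k by omega] at this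
      refine ⟨k-1, by omega, hevk, ?_⟩
      have := medge_eq hN hfN (hBN hek) hkf (Sym2.mem_mk_right _ _)
      rwa [show k - 1 + 1 = k by omega]
  set Podd := ((range L).filter (fun i => ¬ Even i)).image (fun i => s(xf i, xf (i+1)))
    with hPodddef
  set Peven := ((range L).filter (fun i => Even i)).image (fun i => s(xf i, xf (i+1)))
    with hPevendef
  have hmemPodd : ∀ i, i < L → ¬ Even i → s(xf i, xf (i+1)) ∈ Podd := by
    intro i h1 h2
    exact mem_image_of_mem _ (mem_filter.2 ⟨mem_range.2 h1, h2⟩)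
  have hmemPeven : ∀ i, i < L → Even i → s(xf i, xf (i+1)) ∈ Peven := by
    intro i h1 h2
    exact mem_image_of_mem _ (mem_filter.2 ⟨mem_range.2 h1, h2⟩)
  have hPoddelim : ∀ e ∈ Podd, ∃ i, i < L ∧ ¬ Even i ∧ e = s(xf i, xf (i+1)) := by
    intro e he
    obtain ⟨i, hi, rfl⟩ := mem_image.1 he
    exact ⟨i, mem_range.1 (mem_filter.1 hi).1, (mem_filter.1 hi).2, rfl⟩
  have hPevenelim : ∀ e ∈ Peven, ∃ i, i < L ∧ Even i ∧ e = s(xf i, xf (i+1)) := by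
    intro e he
    obtain ⟨i, hi, rfl⟩ := mem_image.1 he
    exact ⟨i, mem_range.1 (mem_filter.1 hi).1, (mem_filter.1 hi).2, rfl⟩
  have hPoddA : Podd ⊆ A := by
    intro e he
    obtain ⟨i, h1, h2, rfl⟩ := hPoddelim e he
    exact hedgeA i h1 h2
  have hPevenB : Peven ⊆ B := by
    intro e he
    obtain ⟨i, h1, h2, rfl⟩ := hPevenelim e he
    exact hedgeB i h1 h2
  have hPoddM : Podd ⊆ M := hPoddA.trans hAM
  have hPevenN : Peven ⊆ N := hPevenB.trans hBN
  have injexf : ∀ i j, i < L → j < L → s(xf i, xf (i+1)) = s(xf j, xf (j+1)) → i = j := by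
    intro i j hiL hjL heq
    by_contra hne
    rcases Sym2.eq_iff.1 heq with ⟨h1, h2⟩ | ⟨h1, h2⟩
    · rcases Nat.lt_or_ge i j with h | h
      · exact hdis i j h (by omega) h1
      · exact hdis j i (by omega) (by omega) h1.symm
    · rcases Nat.lt_or_ge i j with h | h
      · exact hdis i (j+1) (by omega) (by omega) h1
      · exact hdis j (i+1) (by omega) (by omega) h2.symm
  have hcardPodd : Podd.card = L / 2 := by
    rw [hPodddef, Finset.card_image_of_injOn, card_range_filter_odd]
    intro i hi j hj heq
    simp only [coe_filter, Set.mem_setOf_eq, Finset.mem_coe, mem_range] at hi hj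
    exact injexf i j hi.1 hj.1 heq
  have hcardPeven : Peven.card = (L + 1) / 2 := by
    rw [hPevendef, Finset.card_image_of_injOn, card_range_filter_even]
    intro i hi j hj heq
    simp only [coe_filter, Set.mem_setOf_eq, Finset.mem_coe, mem_range] at hi hj
    exact injexf i j hi.1 hj.1 heq
  have havoidM : ∀ e ∈ M, e ∉ Podd → ∀ k, k ≤ L → xf k ∉ e := by
    intro e heM henP k hk hke
    obtain ⟨i, hiL, hiO, rfl⟩ := hMedge k hk e heM hke
    exact henP (hmemPodd i hiL hiO)
  have havoidN : ∀ f ∈ N, f ∉ Peven → ∀ k, k ≤ L → xf k ∉ f := by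
    intro f hfN hfnP k hk hkf
    obtain ⟨i, hiL, hiE, rfl⟩ := hNedge k hk f hfN hkf
    exact hfnP (hmemPeven i hiL hiE)
  -- supp-disjointness for the union constructions
  have hdM : Disjoint (msupp (M \ Podd)) (msupp Peven) := by
    rw [Finset.disjoint_left]
    intro v hv1 hv2
    obtain ⟨e, he, hve⟩ := mem_msupp.1 hv1
    obtain ⟨f, hf, hvf⟩ := mem_msupp.1 hv2
    obtain ⟨i, hiL, hiE, rfl⟩ := hPevenelim f hf
    rcases Sym2.mem_iff.1 hvf with rfl | rfl
    · exact havoidM e (mem_sdiff.1 he).1 (mem_sdiff.1 he).2 i (by omega) hve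
    · exact havoidM e (mem_sdiff.1 he).1 (mem_sdiff.1 he).2 (i+1) (by omega) hve
  have hdN : Disjoint (msupp (N \ Peven)) (msupp Podd) := by
    rw [Finset.disjoint_left]
    intro v hv1 hv2
    obtain ⟨e, he, hve⟩ := mem_msupp.1 hv1
    obtain ⟨f, hf, hvf⟩ := mem_msupp.1 hv2
    obtain ⟨i, hiL, hiO, rfl⟩ := hPoddelim f hf
    rcases Sym2.mem_iff.1 hvf with rfl | rfl
    · exact havoidN e (mem_sdiff.1 he).1 (mem_sdiff.1 he).2 i (by omega) hve
    · exact havoidN e (mem_sdiff.1 he).1 (mem_sdiff.1 he).2 (i+1) (by omega) hve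
  have hM'match : IsMatchingSet G ((M \ Podd) ∪ Peven) :=
    munion (msub hM sdiff_subset) (msub hN hPevenN) hdM
  have hN'match : IsMatchingSet G ((N \ Peven) ∪ Podd) :=
    munion (msub hN sdiff_subset) (msub hM hPoddM) hdN
  have hcardM' : ((M \ Podd) ∪ Peven).card = M.card - L/2 + (L+1)/2 := by
    rw [card_union_of_disjoint (disjoint_of_supp_disjoint (msub hM sdiff_subset) hdM),
      card_sdiff_of_subset hPoddM, hcardPodd, hcardPeven]
  have hcardN' : ((N \ Peven) ∪ Podd).card = N.card - (L+1)/2 + L/2 := by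
    rw [card_union_of_disjoint (disjoint_of_supp_disjoint (msub hN sdiff_subset) hdN),
      card_sdiff_of_subset hPevenN, hcardPeven, hcardPodd]
  have hPoddcardle : Podd.card ≤ M.card := card_le_card hPoddM
  have hPevencardle : Peven.card ≤ N.card := card_le_card hPevenN
  by_cases hLev : Even L
  case neg =>
    -- L odd : augmenting, M gets bigger
    left
    refine ⟨(M \ Podd) ∪ Peven, hM'match, ?_⟩
    rw [hcardM']
    rw [Nat.even_iff] at hLev
    omega
  case pos =>
    -- L even : exchange
    right
    have hL2 : 2 ≤ L := by rw [Nat.even_iff] at hLev; omega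
    have hyu : xf L ≠ u := by
      rw [← hx0]; exact (hdis 0 L (by omega) le_rfl).symm
    have hoddL1 : ¬ Even (L-1) := by rw [Nat.even_iff] at *; omega
    have heL : s(xf (L-1), xf L) ∈ A := by
      have := hedgeA (L-1) (by omega) hoddL1
      rwa [show L - 1 + 1 = L by omega] at this
    have hyM : xf L ∈ msupp M := mem_msupp.2 ⟨_, hAM heL, Sym2.mem_mk_right _ _⟩
    have hyN : xf L ∉ msupp N := by
      intro h
      obtain ⟨f, hf, hyf⟩ := mem_msupp.1 h
      obtain ⟨i, hiL, hiE, rfl⟩ := hNedge L le_rfl f hf hyf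
      rcases Sym2.mem_iff.1 hyf with h1 | h1
      · exact hdis i L hiL le_rfl h1.symm
      · have : i + 1 < L := by
          rcases Nat.lt_or_ge (i+1) L with h | h
          · exact h
          · exfalso; rw [Nat.even_iff] at hiE hLev; omega
        exact hdis (i+1) L this le_rfl h1.symm
    -- coverage helpers
    have hcovM : ∀ k, 1 ≤ k → k ≤ L → ∃ i, i < L ∧ ¬ Even i ∧ xf k ∈ s(xf i, xf (i+1)) := by
      intro k h1 h2
      by_cases hkE : Even k
      · refine ⟨k-1, by omega, by rw [Nat.even_iff] at *; omega, ?_⟩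
        have : k - 1 + 1 = k := by omega
        rw [this]
        exact Sym2.mem_mk_right _ _
      · have hkL : k < L := by
          rcases Nat.lt_or_ge k L with h | h
          · exact h
          · exfalso; rw [Nat.even_iff] at hkE hLev; omega
        exact ⟨k, hkL, hkE, Sym2.mem_mk_left _ _⟩
    have hcovN : ∀ k, k ≤ L - 1 → ∃ i, i < L ∧ Even i ∧ xf k ∈ s(xf i, xf (i+1)) := by
      intro k h2
      by_cases hkE : Even k
      · exact ⟨k, by omega, hkE, Sym2.mem_mk_left _ _⟩
      · have h1 : 1 ≤ k := by rw [Nat.even_iff] at hkE; omega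
        refine ⟨k-1, by omega, by rw [Nat.even_iff] at *; omega, ?_⟩
        have : k - 1 + 1 = k := by omega
        rw [this]
        exact Sym2.mem_mk_right _ _
    refine ⟨xf L, (M \ Podd) ∪ Peven, (N \ Peven) ∪ Podd, hyu, hyM, hyN,
      hM'match, hN'match, ?_, ?_, ?_, ?_, ?_⟩
    · rw [hcardM']; rw [Nat.even_iff] at hLev; omega
    · rw [hcardN']; rw [Nat.even_iff] at hLev; omega
    · -- msupp M' = insert u (msupp M) \ {xf L}
      ext v
      simp only [mem_sdiff, Finset.mem_insert, Finset.mem_singleton]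
      constructor
      · intro hv
        obtain ⟨e, he, hve⟩ := mem_msupp.1 hv
        rcases Finset.mem_union.1 he with he | he
        · have heM := (mem_sdiff.1 he).1
          have henP := (mem_sdiff.1 he).2
          refine ⟨Or.inr (mem_msupp.2 ⟨e, heM, hve⟩), ?_⟩
          intro hvL
          exact havoidM e heM henP L le_rfl (hvL ▸ hve)
        · obtain ⟨i, hiL, hiE, rfl⟩ := hPevenelim e he
          have hi1L : i + 1 < L := by
            rcases Nat.lt_or_ge (i+1) L with h | h
            · exact h
            · exfalso; rw [Nat.even_iff] at hiE hLev; omega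
          rcases Sym2.mem_iff.1 hve with rfl | rfl
          · constructor
            · rcases Nat.eq_zero_or_pos i with rfl | hi1
              · exact Or.inl hx0
              · obtain ⟨i', h1, h2, h3⟩ := hcovM i hi1 (by omega)
                exact Or.inr (mem_msupp.2 ⟨_, hAM (hedgeA i' h1 h2), h3⟩)
            · exact hdis i L (by omega) le_rfl
          · constructor
            · obtain ⟨i', h1, h2, h3⟩ := hcovM (i+1) (by omega) (by omega)
              exact Or.inr (mem_msupp.2 ⟨_, hAM (hedgeA i' h1 h2), h3⟩)
            · exact hdis (i+1) L hi1L le_rfl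
      · rintro ⟨hv, hvL⟩
        rcases hv with rfl | hv
        · have h0 : s(xf 0, xf 1) ∈ Peven := hmemPeven 0 (by omega) ⟨0, rfl⟩
          exact mem_msupp.2 ⟨_, Finset.mem_union.2 (Or.inr h0),
            by rw [← hx0]; exact Sym2.mem_mk_left _ _⟩
        · obtain ⟨e, heM, hve⟩ := mem_msupp.1 hv
          by_cases heP : e ∈ Podd
          · obtain ⟨i, hiL, hiO, rfl⟩ := hPoddelim e heP
            have hi1 : 1 ≤ i := by rw [Nat.even_iff] at hiO; omega
            rcases Sym2.mem_iff.1 hve with rfl | rfl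
            · obtain ⟨i', h1, h2, h3⟩ := hcovN i (by omega)
              exact mem_msupp.2 ⟨_, Finset.mem_union.2 (Or.inr (hmemPeven i' h1 h2)), h3⟩
            · have hi2L : i + 1 ≤ L - 1 := by
                have : i + 1 ≠ L := fun h => hvL (by rw [h])
                omega
              obtain ⟨i', h1, h2, h3⟩ := hcovN (i+1) hi2L
              exact mem_msupp.2 ⟨_, Finset.mem_union.2 (Or.inr (hmemPeven i' h1 h2)), h3⟩
          · exact mem_msupp.2 ⟨e, Finset.mem_union.2 (Or.inl (mem_sdiff.2 ⟨heM, heP⟩)), hve⟩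
    · -- msupp N' = insert (xf L) (msupp N) \ {u}
      ext v
      simp only [mem_sdiff, Finset.mem_insert, Finset.mem_singleton]
      constructor
      · intro hv
        obtain ⟨f, hf, hvf⟩ := mem_msupp.1 hv
        rcases Finset.mem_union.1 hf with hf | hf
        · have hfN := (mem_sdiff.1 hf).1
          have hfnP := (mem_sdiff.1 hf).2
          refine ⟨Or.inr (mem_msupp.2 ⟨f, hfN, hvf⟩), ?_⟩
          intro hvu
          exact havoidN f hfN hfnP 0 (by omega) (by rw [hx0, ← hvu] at *; exact hvf)
        · obtain ⟨i, hiL, hiO, rfl⟩ := hPoddelim f hf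
          have hi1 : 1 ≤ i := by rw [Nat.even_iff] at hiO; omega
          rcases Sym2.mem_iff.1 hvf with rfl | rfl
          · refine ⟨?_, ?_⟩
            · obtain ⟨i', h1, h2, h3⟩ := hcovN i (by omega)
              exact Or.inr (mem_msupp.2 ⟨_, hBN (hedgeB i' h1 h2), h3⟩)
            · rw [← hx0]; exact (hdis 0 i (by omega) (by omega)).symm
          · refine ⟨?_, ?_⟩
            · rcases Nat.eq_or_lt_of_le (show i + 1 ≤ L by omega) with h | h
              · exact Or.inl (by rw [h])
              · obtain ⟨i', h1, h2, h3⟩ := hcovN (i+1) (by omega)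
                exact Or.inr (mem_msupp.2 ⟨_, hBN (hedgeB i' h1 h2), h3⟩)
            · rw [← hx0]; exact (hdis 0 (i+1) (by omega) (by omega)).symm
      · rintro ⟨hv, hvu⟩
        rcases hv with rfl | hv
        · have hP : s(xf (L-1), xf L) ∈ Podd := by
            have := hmemPodd (L-1) (by omega) hoddL1
            rwa [show L - 1 + 1 = L by omega] at this
          exact mem_msupp.2 ⟨_, Finset.mem_union.2 (Or.inr hP), Sym2.mem_mk_right _ _⟩
        · obtain ⟨f, hfN, hvf⟩ := mem_msupp.1 hv
          by_cases hfP : f ∈ Peven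
          · obtain ⟨i, hiL, hiE, rfl⟩ := hPevenelim f hfP
            have hi1L : i + 1 < L := by
              rcases Nat.lt_or_ge (i+1) L with h | h
              · exact h
              · exfalso; rw [Nat.even_iff] at hiE hLev; omega
            rcases Sym2.mem_iff.1 hvf with rfl | rfl
            · have hi1 : 1 ≤ i := by
                rcases Nat.eq_zero_or_pos i with rfl | h
                · exact absurd hx0 hvu
                · exact h
              obtain ⟨i', h1, h2, h3⟩ := hcovM i hi1 (by omega)
              exact mem_msupp.2 ⟨_, Finset.mem_union.2 (Or.inr (hmemPodd i' h1 h2)), h3⟩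
            · obtain ⟨i', h1, h2, h3⟩ := hcovM (i+1) (by omega) (by omega)
              exact mem_msupp.2 ⟨_, Finset.mem_union.2 (Or.inr (hmemPodd i' h1 h2)), h3⟩
          · exact mem_msupp.2 ⟨f, Finset.mem_union.2 (Or.inl (mem_sdiff.2 ⟨hfN, hfP⟩)), hvf⟩
    · -- intersection grows
      have hinter : ((N \ Peven) ∪ Podd) ∩ M = (N ∩ M) ∪ Podd := by
        ext e
        simp only [mem_inter, Finset.mem_union, mem_sdiff]
        constructor
        · rintro ⟨h1 | h2, hMe⟩
          · exact Or.inl ⟨h1.1, hMe⟩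
          · exact Or.inr h2
        · rintro (⟨hNe, hMe⟩ | hP)
          · exact ⟨Or.inl ⟨hNe, fun hPe => hBnotM _ (hPevenB hPe) hMe⟩, hMe⟩
          · exact ⟨Or.inr hP, hPoddM hP⟩
      have hdisj2 : Disjoint (N ∩ M) Podd := by
        rw [Finset.disjoint_left]
        intro e he1 he2
        exact hAnotN _ (hPoddA he2) (mem_inter.1 he1).1
      rw [hinter, card_union_of_disjoint hdisj2, hcardPodd]
      omega



/-- Gallai-type lemma: if every non-isolated vertex is missed by some maximum matching,
then no maximum matching misses two vertices in the same component. -/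
lemma gallai (G : SimpleGraph V)
    (hc2 : ∀ v : V, v ∈ msupp G.edgeFinset → ∃ M : Finset (Sym2 V),
        IsMatchingSet G M ∧ M.card = mnum' G ∧ v ∉ msupp M) :
    ∀ M : Finset (Sym2 V), IsMatchingSet G M → M.card = mnum' G →
    ∀ u w : V, u ≠ w → u ∉ msupp M → w ∉ msupp M → ¬ G.Reachable u w := by
  classical
  by_contra hcon
  push_neg at hcon
  obtain ⟨M₀, hM₀, hM₀c, u₀, w₀, hne₀, hu₀, hw₀, hr₀⟩ := hcon
  set P : ℕ → Prop := fun d => ∃ (M : Finset (Sym2 V)) (u w : V),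
    IsMatchingSet G M ∧ M.card = mnum' G ∧ u ≠ w ∧ u ∉ msupp M ∧ w ∉ msupp M ∧
    G.Reachable u w ∧ G.dist u w = d with hPdef
  have hPex : ∃ d, P d := ⟨G.dist u₀ w₀, M₀, u₀, w₀, hM₀, hM₀c, hne₀, hu₀, hw₀, hr₀, rfl⟩
  set d := Nat.find hPex with hddef
  obtain ⟨M, u, w, hM, hMc, hne, hu, hw, hr, hdist⟩ := Nat.find_spec hPex
  rw [← hddef] at hdist
  have hmin : ∀ d' < d, ¬ P d' := fun d' hd' => Nat.find_min hPex hd'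
  have hd1 : 1 ≤ d := by
    rcases Nat.eq_zero_or_pos d with h | h
    · exfalso
      rw [h] at hdist
      exact hne (hr.dist_eq_zero_iff.1 hdist)
    · exact h
  have hd2 : 2 ≤ d := by
    rcases Nat.lt_or_ge d 2 with h | h
    · exfalso
      have hd1' : d = 1 := by omega
      rw [hd1'] at hdist
      have hadj : G.Adj u w := SimpleGraph.dist_eq_one_iff_adj.1 hdist
      obtain ⟨hmm, hcc⟩ := minsert' hM hadj hu hw
      have := card_le_mnum' hmm
      omega
    · exact h
  -- get neighbor z of u on a geodesic
  obtain ⟨p, hp⟩ := hr.exists_walk_length_eq_dist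
  rw [hdist] at hp
  cases p with
  | nil => rw [SimpleGraph.Walk.length_nil] at hp; omega
  | cons hadj q =>
    rename_i z
    rw [SimpleGraph.Walk.length_cons] at hp
    have hzw : G.dist z w ≤ d - 1 := by
      have := SimpleGraph.dist_le q
      omega
    have hrzw : G.Reachable z w := ⟨q⟩
    have hzw_ne : z ≠ w := by
      intro h
      subst h
      have : G.dist u z ≤ 1 := SimpleGraph.dist_le (hadj.toWalk)
      omega
    -- z is covered by M
    have hzM : z ∈ msupp M := by
      by_contra hzM
      exact hmin (G.dist z w) (by omega)
        ⟨M, z, w, hM, hMc, hzw_ne, hzM, hw, hrzw, rfl⟩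
    -- z is non-isolated
    have hzE : z ∈ msupp G.edgeFinset := by
      rw [mem_msupp]
      exact ⟨s(u,z), SimpleGraph.mem_edgeFinset.2 hadj, Sym2.mem_mk_right _ _⟩
    -- choose N missing z maximizing |N ∩ M|
    set S : Finset (Finset (Sym2 V)) := univ.filter
      (fun N => IsMatchingSet G N ∧ N.card = mnum' G ∧ z ∉ msupp N) with hSdef
    have hSne : S.Nonempty := by
      obtain ⟨N, h1, h2, h3⟩ := hc2 z hzE
      exact ⟨N, by simp [hSdef, h1, h2, h3]⟩
    obtain ⟨N, hNS, hNmax⟩ := Finset.exists_max_image S (fun N => (N ∩ M).card) hSne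
    have hNS' : IsMatchingSet G N ∧ N.card = mnum' G ∧ z ∉ msupp N := by
      simpa [hSdef] using hNS
    obtain ⟨hN, hNc, hzN⟩ := hNS'
    -- u is covered by N
    have huN : u ∈ msupp N := by
      by_contra huN
      have hadj' : G.Adj u z := hadj
      obtain ⟨hmm, hcc⟩ := minsert' hN hadj' huN hzN
      have := card_le_mnum' hmm
      omega
    -- apply the exchange lemma
    rcases exchange hM hN hu huN with ⟨M'', hM'', hM''c⟩ | 
      ⟨y, M', N', hyu, hyM, hyN, hM', hN', hM'c, hN'c, hsM', hsN', hcard⟩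
    · have := card_le_mnum' hM''
      omega
    · by_cases hyz : y = z
      · -- M' is a maximum matching missing both z and w : contradiction with minimality
        subst hyz
        have hzM' : y ∉ msupp M' := by
          rw [hsM']
          simp
        have hwM' : w ∉ msupp M' := by
          rw [hsM']
          simp only [mem_sdiff, Finset.mem_insert, Finset.mem_singleton]
          rintro ⟨h1 | h1, -⟩
          · exact hne h1.symm
          · exact hw h1
        exact hmin (G.dist y w) (by omega)
          ⟨M', y, w, hM', by omega, hzw_ne, hzM', hwM', hrzw, rfl⟩
      · -- N' is a better matching missing z : contradiction with maximality
        have hzN' : z ∉ msupp N' := by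
          rw [hsN']
          simp only [mem_sdiff, Finset.mem_insert, Finset.mem_singleton]
          rintro ⟨h1 | h1, -⟩
          · exact hyz h1.symm
          · exact hzN h1
        have hN'S : N' ∈ S := by
          simp only [hSdef, Finset.mem_filter, Finset.mem_univ, true_and]
          exact ⟨hN', by omega, hzN'⟩
        have := hNmax N' hN'S
        omega



/-- restriction of `G` to edges inside `C` -/
def Gin (G : SimpleGraph V) (C : Finset V) : SimpleGraph V where
  Adj a b := G.Adj a b ∧ a ∈ C ∧ b ∈ C
  symm := ⟨fun a b h => ⟨h.1.symm, h.2.2, h.2.1⟩⟩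
  loopless := ⟨fun a h => G.loopless.irrefl a h.1⟩

/-- restriction of `G` to edges outside `C` -/
def Gout (G : SimpleGraph V) (C : Finset V) : SimpleGraph V where
  Adj a b := G.Adj a b ∧ a ∉ C ∧ b ∉ C
  symm := ⟨fun a b h => ⟨h.1.symm, h.2.2, h.2.1⟩⟩
  loopless := ⟨fun a h => G.loopless.irrefl a h.1⟩

lemma Gin_le (G : SimpleGraph V) (C : Finset V) : Gin G C ≤ G := fun a b h => h.1
lemma Gout_le (G : SimpleGraph V) (C : Finset V) : Gout G C ≤ G := fun a b h => h.1

lemma matching_mono {G H : SimpleGraph V} (hGH : G ≤ H) {M : Finset (Sym2 V)}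
    (hM : IsMatchingSet G M) : IsMatchingSet H M :=
  ⟨fun e he => SimpleGraph.edgeSet_mono hGH (hM.1 he), hM.2⟩

lemma edge_split (G : SimpleGraph V) (C : Finset V)
    (hCl : ∀ a b : V, G.Adj a b → (a ∈ C ↔ b ∈ C)) :
    G.edgeFinset.card = (Gin G C).edgeFinset.card + (Gout G C).edgeFinset.card := by
  classical
  have hsub : (Gin G C).edgeFinset ∪ (Gout G C).edgeFinset = G.edgeFinset := by
    ext e
    refine Sym2.ind (fun a b => ?_) e
    simp only [Finset.mem_union, SimpleGraph.mem_edgeFinset, SimpleGraph.mem_edgeSet]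
    constructor
    · rintro (h | h) <;> exact h.1
    · intro h
      by_cases ha : a ∈ C
      · exact Or.inl ⟨h, ha, (hCl a b h).1 ha⟩
      · exact Or.inr ⟨h, ha, fun hb => ha ((hCl a b h).2 hb)⟩
  have hdisj : Disjoint (Gin G C).edgeFinset (Gout G C).edgeFinset := by
    rw [Finset.disjoint_left]
    intro e he1 he2
    revert he1 he2
    refine Sym2.ind (fun a b => ?_) e
    simp only [SimpleGraph.mem_edgeFinset, SimpleGraph.mem_edgeSet]
    rintro ⟨-, ha, -⟩ ⟨-, ha', -⟩
    exact ha' ha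
  rw [← hsub, card_union_of_disjoint hdisj]

lemma edge_split_vert (G : SimpleGraph V) (v : V) :
    G.edgeFinset.card = G.degree v + (Gout G {v}).edgeFinset.card := by
  classical
  have hsub : G.incidenceFinset v ∪ (Gout G {v}).edgeFinset = G.edgeFinset := by
    ext e
    refine Sym2.ind (fun a b => ?_) e
    simp only [Finset.mem_union, SimpleGraph.mem_edgeFinset, SimpleGraph.mem_edgeSet,
      SimpleGraph.mem_incidenceFinset]
    constructor
    · rintro (h | h)
      · exact h.1
      · exact h.1
    · intro h
      by_cases hv : v ∈ s(a,b)
      · exact Or.inl ⟨h, hv⟩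
      · rw [Sym2.mem_iff] at hv
        push_neg at hv
        exact Or.inr ⟨h, by simp [Ne.symm hv.1], by simp [Ne.symm hv.2]⟩
  have hdisj : Disjoint (G.incidenceFinset v) (Gout G {v}).edgeFinset := by
    rw [Finset.disjoint_left]
    intro e he1 he2
    revert he1 he2
    refine Sym2.ind (fun a b => ?_) e
    simp only [SimpleGraph.mem_edgeFinset, SimpleGraph.mem_edgeSet,
      SimpleGraph.mem_incidenceFinset]
    rintro ⟨-, hv⟩ ⟨-, ha, hb⟩
    rw [Sym2.mem_iff] at hv
    simp only [Finset.mem_singleton] at ha hb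
    rcases hv with rfl | rfl
    · exact ha rfl
    · exact hb rfl
  rw [← hsub, card_union_of_disjoint hdisj, SimpleGraph.card_incidenceFinset_eq_degree]

lemma degree_mono {G H : SimpleGraph V} (hGH : G ≤ H) (v : V) : G.degree v ≤ H.degree v := by
  classical
  apply Finset.card_le_card
  intro w hw
  rw [SimpleGraph.mem_neighborFinset] at hw ⊢
  exact hGH hw

lemma Gin_degree_zero (G : SimpleGraph V) (C : Finset V) {v : V} (hv : v ∉ C) :
    (Gin G C).degree v = 0 := by
  classical
  have h : (Gin G C).neighborFinset v = ∅ := by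
    ext w
    simp only [SimpleGraph.mem_neighborFinset, Finset.notMem_empty, iff_false]
    rintro ⟨-, hv', -⟩
    exact hv hv'
  show ((Gin G C).neighborFinset v).card = 0
  rw [h, Finset.card_empty]

lemma Gin_degree_lt (G : SimpleGraph V) (C : Finset V) (v : V) :
    (Gin G C).degree v ≤ C.card - 1 ∨ (Gin G C).degree v = 0 := by
  classical
  by_cases hv : v ∈ C
  · left
    have : (Gin G C).neighborFinset v ⊆ C.erase v := by
      intro w hw
      rw [SimpleGraph.mem_neighborFinset] at hw
      exact Finset.mem_erase.2 ⟨fun h => (Gin G C).loopless.irrefl v (h ▸ hw), hw.2.2⟩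
    calc (Gin G C).degree v ≤ (C.erase v).card := Finset.card_le_card this
    _ = C.card - 1 := Finset.card_erase_of_mem hv
  · right; exact Gin_degree_zero G C hv

lemma twice_ein_le (G : SimpleGraph V) (C : Finset V) (D : ℕ)
    (hdeg : ∀ v ∈ C, (Gin G C).degree v ≤ D) :
    2 * (Gin G C).edgeFinset.card ≤ C.card * D := by
  classical
  have h1 : ∑ v, (Gin G C).degree v = 2 * (Gin G C).edgeFinset.card :=
    SimpleGraph.sum_degrees_eq_twice_card_edges _
  have h2 : ∑ v, (Gin G C).degree v = ∑ v ∈ C, (Gin G C).degree v := by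
    symm
    apply Finset.sum_subset (Finset.subset_univ C)
    intro v _ hv
    exact Gin_degree_zero G C hv
  have h3 : ∑ v ∈ C, (Gin G C).degree v ≤ ∑ v ∈ C, D := Finset.sum_le_sum hdeg
  rw [Finset.sum_const, smul_eq_mul] at h3
  omega


lemma sym2_decomp (e : Sym2 V) : ∃ x y, e = s(x,y) := ⟨e.out.1, e.out.2, e.out_eq.symm⟩

lemma main (Δ : ℕ) (hΔ : 1 ≤ Δ) :
    ∀ n : ℕ, ∀ G : SimpleGraph V, G.edgeFinset.card ≤ n → (∀ v, G.degree v ≤ Δ) →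
    G.edgeFinset.card ≤ Δ * mnum' G + (Δ/2) * (mnum' G / ((Δ+1)/2)) := by
  intro n
  induction n with
  | zero =>
    intro G hn hdeg
    omega
  | succ n IH =>
    intro G hn hdeg
    by_cases h0 : G.edgeFinset.card = 0
    · rw [h0]; exact Nat.zero_le _
    obtain ⟨e0, he0⟩ := Finset.card_pos.1 (Nat.pos_of_ne_zero h0)
    obtain ⟨a, b0, rfl⟩ := sym2_decomp e0
    have hab : G.Adj a b0 := (SimpleGraph.mem_edgeSet G).1 (SimpleGraph.mem_edgeFinset.1 he0)
    by_cases hcase : ∃ v : V, 0 < G.degree v ∧ ∀ M : Finset (Sym2 V),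
        IsMatchingSet G M → M.card = mnum' G → v ∈ msupp M
    · -- Case 1 : essential non-isolated vertex
      obtain ⟨v, hdv, hess⟩ := hcase
      have hν1 : 1 ≤ mnum' G := by
        obtain ⟨hmm, hcc⟩ := minsert' (isMatchingSet_empty') hab
          (by simp [mem_msupp]) (by simp [mem_msupp])
        have := card_le_mnum' hmm
        simp only [Finset.card_empty] at hcc
        omega
      have hsplit := edge_split_vert G v
      have hdeg' : ∀ w, (Gout G {v}).degree w ≤ Δ :=
        fun w => (degree_mono (Gout_le G {v}) w).trans (hdeg w)
      have hν' : mnum' (Gout G {v}) ≤ mnum' G - 1 := by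
        obtain ⟨M', hM', hM'c⟩ := exists_max_matching' (Gout G {v})
        have hMg : IsMatchingSet G M' := matching_mono (Gout_le G {v}) hM'
        have hvM : v ∉ msupp M' := by
          intro h
          obtain ⟨e, he, hve⟩ := mem_msupp.1 h
          obtain ⟨x, y, rfl⟩ := sym2_decomp e
          have hxy : (Gout G {v}).Adj x y := (SimpleGraph.mem_edgeSet _).1 (hM'.1 he)
          rcases Sym2.mem_iff.1 hve with rfl | rfl
          · exact hxy.2.1 (Finset.mem_singleton_self v)
          · exact hxy.2.2 (Finset.mem_singleton_self v)
        have h1 : M'.card ≤ mnum' G := card_le_mnum' hMg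
        have h2 : M'.card ≠ mnum' G := fun h => hvM (hess M' hMg h)
        omega
      have hle : (Gout G {v}).edgeFinset.card ≤ n := by omega
      have hIH := IH (Gout G {v}) hle hdeg'
      have hmono : Δ * mnum' (Gout G {v}) + (Δ/2) * (mnum' (Gout G {v}) / ((Δ+1)/2))
          ≤ Δ * (mnum' G - 1) + (Δ/2) * ((mnum' G - 1) / ((Δ+1)/2)) :=
        Nat.add_le_add (Nat.mul_le_mul le_rfl hν')
          (Nat.mul_le_mul le_rfl (Nat.div_le_div_right hν'))
      have hdvle : G.degree v ≤ Δ := hdeg v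
      have h3 : Δ * (mnum' G - 1) + Δ = Δ * mnum' G := by
        have h4 : mnum' G - 1 + 1 = mnum' G := by omega
        calc Δ * (mnum' G - 1) + Δ = Δ * (mnum' G - 1 + 1) := by ring
        _ = Δ * mnum' G := by rw [h4]
      have h5 : (Δ/2) * ((mnum' G - 1) / ((Δ+1)/2)) ≤ (Δ/2) * (mnum' G / ((Δ+1)/2)) :=
        Nat.mul_le_mul le_rfl (Nat.div_le_div_right (by omega))
      omega
    · -- Case 2 : every non-isolated vertex is missed by some maximum matching
      push_neg at hcase
      have hc2 : ∀ v : V, v ∈ msupp G.edgeFinset → ∃ M : Finset (Sym2 V),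
          IsMatchingSet G M ∧ M.card = mnum' G ∧ v ∉ msupp M := by
        intro v hv
        obtain ⟨e, he, hve⟩ := mem_msupp.1 hv
        obtain ⟨x, y, rfl⟩ := sym2_decomp e
        have hxy : G.Adj x y := (SimpleGraph.mem_edgeSet G).1 (SimpleGraph.mem_edgeFinset.1 he)
        have hdv : 0 < G.degree v := by
          rcases Sym2.mem_iff.1 hve with rfl | rfl
          · exact Finset.card_pos.2 ⟨y, (SimpleGraph.mem_neighborFinset _ _ _).2 hxy⟩
          · exact Finset.card_pos.2 ⟨x, (SimpleGraph.mem_neighborFinset _ _ _).2 hxy.symm⟩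
        obtain ⟨M, h1, h2, h3⟩ := hcase v hdv
        exact ⟨M, h1, h2, h3⟩
      set C : Finset V := univ.filter (fun x => G.Reachable a x) with hCdef
      have hCl : ∀ x y : V, G.Adj x y → (x ∈ C ↔ y ∈ C) := by
        intro x y hxy
        simp only [hCdef, mem_filter, mem_univ, true_and]
        exact ⟨fun h => h.trans hxy.reachable, fun h => h.trans hxy.symm.reachable⟩
      have haC : a ∈ C := by
        simp only [hCdef, mem_filter, mem_univ, true_and]
        exact SimpleGraph.Reachable.refl a
      have hbC : b0 ∈ C := by
        simp only [hCdef, mem_filter, mem_univ, true_and]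
        exact hab.reachable
      obtain ⟨M, hM, hMc⟩ := exists_max_matching' G
      set MC := M.filter (fun e => ∀ x ∈ e, x ∈ C) with hMCdef
      have hMCM : MC ⊆ M := filter_subset _ _
      have hMCmatch : IsMatchingSet G MC := msub hM hMCM
      set m := MC.card with hmdef
      have hmν : m ≤ mnum' G := hMc ▸ card_le_card hMCM
      have hGallai := gallai G hc2 M hM hMc
      set R := C \ msupp M with hRdef
      have hr1 : R.card ≤ 1 := by
        rw [Finset.card_le_one]
        intro x hx y hy
        by_contra hne
        simp only [hRdef, mem_sdiff, hCdef, mem_filter, mem_univ, true_and] at hx hy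
        exact hGallai x y hne hx.2 hy.2 (hx.1.symm.trans hy.1)
      have hsupp_eq : C ∩ msupp M = msupp MC := by
        ext v
        simp only [mem_inter]
        constructor
        · rintro ⟨hvC, hvM⟩
          obtain ⟨e, he, hve⟩ := mem_msupp.1 hvM
          obtain ⟨x, y, rfl⟩ := sym2_decomp e
          have hxy : G.Adj x y := (SimpleGraph.mem_edgeSet G).1 (hM.1 he)
          have hin : ∀ z ∈ s(x,y), z ∈ C := by
            intro z hz
            rcases Sym2.mem_iff.1 hve with rfl | rfl
            · rcases Sym2.mem_iff.1 hz with rfl | rfl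
              · exact hvC
              · exact (hCl v z hxy).1 hvC
            · rcases Sym2.mem_iff.1 hz with rfl | rfl
              · exact (hCl z v hxy).2 hvC
              · exact hvC
          exact mem_msupp.2 ⟨_, mem_filter.2 ⟨he, hin⟩, hve⟩
        · intro hv
          obtain ⟨e, he, hve⟩ := mem_msupp.1 hv
          have h1 := mem_filter.1 he
          exact ⟨h1.2 v hve, mem_msupp.2 ⟨e, h1.1, hve⟩⟩
      have hCcard : C.card = 2 * m + R.card := by
        have h6 := Finset.card_inter_add_card_sdiff C (msupp M)
        rw [hsupp_eq, card_msupp' hMCmatch, ← hRdef] at h6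
        omega
      set ein := (Gin G C).edgeFinset.card with heindef
      have hboundA : 2 * ein ≤ C.card * Δ := twice_ein_le G C Δ
        (fun v hv => (degree_mono (Gin_le G C) v).trans (hdeg v))
      have hboundB : 2 * ein ≤ C.card * (C.card - 1) := twice_ein_le G C (C.card - 1)
        (fun v hv => by
          rcases Gin_degree_lt G C v with h | h
          · exact h
          · omega)
      have hein1 : 1 ≤ ein := by
        apply Finset.card_pos.2
        exact ⟨s(a, b0), SimpleGraph.mem_edgeFinset.2
          (show s(a,b0) ∈ (Gin G C).edgeSet from
            (SimpleGraph.mem_edgeSet _).2 ⟨hab, haC, hbC⟩)⟩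
      have hm1 : 1 ≤ m := by
        have hC2 : 2 ≤ C.card := Finset.one_lt_card.2 ⟨a, haC, b0, hbC, hab.ne⟩
        omega
      have hνo : mnum' (Gout G C) + m ≤ mnum' G := by
        obtain ⟨Mo, hMo, hMoc⟩ := exists_max_matching' (Gout G C)
        have hMog : IsMatchingSet G Mo := matching_mono (Gout_le G C) hMo
        have hdisj : Disjoint (msupp Mo) (msupp MC) := by
          rw [Finset.disjoint_left]
          intro x hx1 hx2
          obtain ⟨e, he, hxe⟩ := mem_msupp.1 hx1
          obtain ⟨p, q, rfl⟩ := sym2_decomp e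
          have hpq : (Gout G C).Adj p q := (SimpleGraph.mem_edgeSet _).1 (hMo.1 he)
          obtain ⟨f, hf, hxf⟩ := mem_msupp.1 hx2
          have hfC := (mem_filter.1 hf).2 x hxf
          rcases Sym2.mem_iff.1 hxe with rfl | rfl
          · exact hpq.2.1 hfC
          · exact hpq.2.2 hfC
        have hun : IsMatchingSet G (Mo ∪ MC) := munion hMog hMCmatch hdisj
        have hcard : (Mo ∪ MC).card = Mo.card + MC.card :=
          card_union_of_disjoint (disjoint_of_supp_disjoint hMog hdisj)
        have := card_le_mnum' hun
        omega
      have htot : G.edgeFinset.card = ein + (Gout G C).edgeFinset.card := edge_split G C hCl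
      have hout_le_n : (Gout G C).edgeFinset.card ≤ n := by omega
      have hdego : ∀ v, (Gout G C).degree v ≤ Δ :=
        fun v => (degree_mono (Gout_le G C) v).trans (hdeg v)
      have hIH := IH (Gout G C) hout_le_n hdego
      set ν := mnum' G with hνdef
      set kk := (Δ+1)/2 with hkkdef
      have hkk : kk = (Δ+1)/2 := hkkdef
      have hkk1 : 1 ≤ kk := by omega
      have hmono : Δ * mnum' (Gout G C) + (Δ/2) * (mnum' (Gout G C) / kk)
          ≤ Δ * (ν - m) + (Δ/2) * ((ν - m) / kk) :=
        Nat.add_le_add (Nat.mul_le_mul le_rfl (by omega))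
          (Nat.mul_le_mul le_rfl (Nat.div_le_div_right (by omega)))
      have hΔν : Δ * m + Δ * (ν - m) = Δ * ν := by
        rw [← Nat.mul_add]
        congr 1
        omega
      by_cases hbig : kk ≤ m ∧ R.card = 1
      · -- bonus case
        obtain ⟨hkm, hr⟩ := hbig
        have h1 : 2 * ein ≤ 2*(Δ*m) + Δ := by
          have hh : C.card * Δ = 2*(Δ*m) + Δ := by
            rw [hCcard, hr]; ring
          omega
        have h2 : ein ≤ Δ * m + Δ/2 := by
          set q := Δ * m
          omega
        have h3 : (ν - m) / kk + 1 ≤ ν / kk := by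
          have h4 : (ν - m) / kk + 1 = (ν - m + kk) / kk := by
            rw [Nat.add_div_right _ (by omega)]
          rw [h4]
          exact Nat.div_le_div_right (by omega)
        have h6 : (Δ/2) * ((ν - m)/kk + 1) ≤ (Δ/2) * (ν/kk) :=
          Nat.mul_le_mul le_rfl h3
        have h7 : (Δ/2) * ((ν - m)/kk + 1) = (Δ/2) * ((ν - m)/kk) + Δ/2 := by ring
        have h8 := hIH.trans hmono
        omega
      · -- no bonus case : ein ≤ Δ * m
        have h2 : ein ≤ Δ * m := by
          rcases Nat.lt_or_ge R.card 1 with hR | hR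
          · -- R.card = 0 : C.card = 2m
            have hR0 : R.card = 0 := by omega
            have hh : C.card * Δ = 2*(Δ*m) := by rw [hCcard, hR0]; ring
            set q := Δ * m
            omega
          · -- R.card = 1, and then m < kk
            have hR1 : R.card = 1 := by omega
            have hmk : m < kk := by
              by_contra hmk
              exact hbig ⟨by omega, hR1⟩
            have hcd : 2*m + 1 ≤ Δ := by omega
            have hh : C.card * (C.card - 1) = 2*((2*m+1) * m) := by
              rw [hCcard, hR1]
              have : 2*m + 1 - 1 = 2*m := by omega
              rw [this]
              ring
            have h9 : ein ≤ (2*m+1) * m := by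
              set q := (2*m+1) * m
              omega
            calc ein ≤ (2*m+1) * m := h9
            _ ≤ Δ * m := Nat.mul_le_mul hcd le_rfl
        have h8 := hIH.trans hmono
        have h5 : (Δ/2) * ((ν - m)/kk) ≤ (Δ/2) * (ν/kk) :=
          Nat.mul_le_mul le_rfl (Nat.div_le_div_right (by omega))
        omega

end Walk
end CH

open CH in
/-- Chvátal–Hanson: a graph with matching number at most `ν` and maximum degree at most `Δ`
has at most `Δν + ⌊Δ/2⌋⌊ν/⌈Δ/2⌉⌋ ≤ Δν + ν` edges. -/
theorem stmt_1 {V : Type*} [Fintype V] [DecidableEq V] (G : SimpleGraph V)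
    (ν Δ : ℕ) (hν : 1 ≤ ν) (hΔ : 1 ≤ Δ)
    (hmatch : ∀ M : Finset (Sym2 V), IsMatchingSet G M → M.card ≤ ν)
    (hdeg : ∀ v : V, (G.neighborSet v).ncard ≤ Δ) :
    G.edgeSet.ncard ≤ Δ * ν + (Δ / 2) * (ν / ((Δ + 1) / 2)) ∧
      G.edgeSet.ncard ≤ Δ * ν + ν := by
  classical
  have hdeg' : ∀ v : V, G.degree v ≤ Δ := by
    intro v
    have h1 : (G.neighborSet v).ncard = G.degree v := by
      rw [Set.ncard_eq_toFinset_card', Set.toFinset_card,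
        SimpleGraph.card_neighborSet_eq_degree]
    rw [← h1]
    exact hdeg v
  have hνle : mnum' G ≤ ν := by
    obtain ⟨M, hM, hMc⟩ := exists_max_matching' G
    rw [← hMc]
    exact hmatch M hM
  have hmain := main Δ hΔ (G.edgeFinset.card) G le_rfl hdeg'
  have hE : G.edgeSet.ncard = G.edgeFinset.card := by
    rw [← SimpleGraph.coe_edgeFinset, Set.ncard_coe_finset]
  have hmono : Δ * mnum' G + (Δ/2) * (mnum' G / ((Δ+1)/2))
      ≤ Δ * ν + (Δ/2) * (ν / ((Δ+1)/2)) :=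
    Nat.add_le_add (Nat.mul_le_mul le_rfl hνle)
      (Nat.mul_le_mul le_rfl (Nat.div_le_div_right hνle))
  have hfirst : G.edgeSet.ncard ≤ Δ * ν + (Δ/2) * (ν / ((Δ+1)/2)) := by
    rw [hE]
    exact hmain.trans hmono
  refine ⟨hfirst, ?_⟩
  have h2 : (Δ/2) * (ν / ((Δ+1)/2)) ≤ ν := by
    calc (Δ/2) * (ν / ((Δ+1)/2)) ≤ ((Δ+1)/2) * (ν / ((Δ+1)/2)) :=
      Nat.mul_le_mul (Nat.div_le_div_right (by omega)) le_rfl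
    _ = (ν / ((Δ+1)/2)) * ((Δ+1)/2) := Nat.mul_comm _ _
    _ ≤ ν := Nat.div_mul_le_self _ _
  omega
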